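/- arXiv:2002.11609 — 4 statements merged into one kernel-verified Lean document; each statement's English description precedes it below -/
import Mathlib

section
/- For 0 ≤ a < 1 and any real λ with a·e^λ < 1, the moment generating function of the normalized ARMA layer coefficients f, defined by f_p = coefficient of the convolution of the geometric sequence ((1−a)aⁿ)_{n≥0} normalized, satisfies M_f(λ) = (1/(1 − a e^λ)) · Σ_{p=0}^{K−1} ((1−a)/K) e^{λ p d}, and its first derivative at λ = 0 equals a/(1−a) + d(K−1)/2. -/
open Finset

lemma gauss_sum_real_aux (n : ℕ) :
    (∑ p ∈ Finset.range n, (p : ℝ)) = (n : ℝ) * ((n : ℝ) - 1) / 2 := by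
  induction n with
  | zero => simp
  | succ m ih => rw [Finset.sum_range_succ, ih]; push_cast; ring

theorem arma_mgf_and_first_moment
    (a : ℝ) (ha0 : 0 ≤ a) (ha1 : a < 1)
    (d K : ℕ) (hd : 1 ≤ d) (hK : 1 ≤ K)
    (f : ℕ → ℝ)
    (hf : ∀ p : ℕ, f p = ∑ q ∈ Finset.range K,
      if d * q ≤ p then ((1 - a) / K) * a ^ (p - d * q) else 0) :
    (∀ l : ℝ, a * Real.exp l < 1 →
      ∑' p : ℕ, f p * Real.exp (l * p)
        = (1 / (1 - a * Real.exp l))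
            * ∑ p ∈ Finset.range K, ((1 - a) / K) * Real.exp (l * (p * d)))
    ∧ deriv (fun l : ℝ => (1 / (1 - a * Real.exp l))
            * ∑ p ∈ Finset.range K, ((1 - a) / K) * Real.exp (l * (p * d))) 0
        = a / (1 - a) + (d : ℝ) * ((K : ℝ) - 1) / 2 := by
  have hK0 : (K : ℝ) ≠ 0 := Nat.cast_ne_zero.2 (by omega)
  have h1a : (1 : ℝ) - a ≠ 0 := by linarith
  constructor
  · intro l hl
    set r := a * Real.exp l with hrdef
    have hr0 : 0 ≤ r := mul_nonneg ha0 (Real.exp_pos l).le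
    have hgeo : Summable (fun n : ℕ => r ^ n) := summable_geometric_of_lt_one hr0 hl
    have hind : ∀ q : ℕ, Summable (fun p : ℕ => if d * q ≤ p then r ^ (p - d * q) else (0:ℝ)) := by
      intro q
      refine (summable_nat_add_iff (d * q)).1 ?_
      refine hgeo.congr fun n => ?_
      simp
    have htind : ∀ q : ℕ, (∑' p : ℕ, if d * q ≤ p then r ^ (p - d * q) else (0:ℝ)) = (1 - r)⁻¹ := by
      intro q
      have h1 := Summable.sum_add_tsum_nat_add (f := fun p : ℕ => if d * q ≤ p then r ^ (p - d * q) else (0:ℝ))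
        (d * q) (hind q)
      have h2 : (∑ i ∈ Finset.range (d * q), if d * q ≤ i then r ^ (i - d * q) else (0:ℝ)) = 0 := by
        apply Finset.sum_eq_zero
        intro i hi
        rw [Finset.mem_range] at hi
        rw [if_neg (by omega)]
      have h3 : (∑' n : ℕ, if d * q ≤ n + d * q then r ^ (n + d * q - d * q) else (0:ℝ))
          = ∑' n : ℕ, r ^ n := by
        apply tsum_congr; intro n; simp
      rw [h2, zero_add, h3] at h1
      rw [← h1, tsum_geometric_of_lt_one hr0 hl]
    have hpt : ∀ p : ℕ, f p * Real.exp (l * p) = ∑ q ∈ Finset.range K,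
        ((1 - a) / K) * Real.exp (l * (q * d)) * (if d * q ≤ p then r ^ (p - d * q) else (0:ℝ)) := by
      intro p
      rw [hf, Finset.sum_mul]
      refine Finset.sum_congr rfl fun q _ => ?_
      by_cases h : d * q ≤ p
      · rw [if_pos h, if_pos h]
        have hexp : Real.exp (l * p)
            = Real.exp (l * ((p - d * q : ℕ) : ℝ)) * Real.exp (l * ((q : ℝ) * d)) := by
          rw [← Real.exp_add]
          congr 1
          have hc : ((p - d * q : ℕ) : ℝ) = (p : ℝ) - (d : ℝ) * q := by
            rw [Nat.cast_sub h]; push_cast; ring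
          rw [hc]; ring
        have hrn : r ^ (p - d * q) = a ^ (p - d * q) * Real.exp (l * ((p - d * q : ℕ) : ℝ)) := by
          rw [hrdef, mul_pow]
          congr 1
          rw [← Real.exp_nat_mul]
          congr 1
          ring
        rw [hexp, hrn]
        ring
      · rw [if_neg h, if_neg h, zero_mul, mul_zero]
    calc ∑' p : ℕ, f p * Real.exp (l * p)
        = ∑' p : ℕ, ∑ q ∈ Finset.range K,
            ((1 - a) / K) * Real.exp (l * (q * d)) * (if d * q ≤ p then r ^ (p - d * q) else (0:ℝ)) :=
          tsum_congr hpt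
      _ = ∑ q ∈ Finset.range K, ∑' p : ℕ,
            ((1 - a) / K) * Real.exp (l * (q * d)) * (if d * q ≤ p then r ^ (p - d * q) else (0:ℝ)) :=
          Summable.tsum_finsetSum (fun q _ => (hind q).mul_left _)
      _ = ∑ q ∈ Finset.range K, ((1 - a) / K) * Real.exp (l * (q * d)) * (1 - r)⁻¹ := by
          refine Finset.sum_congr rfl fun q _ => ?_
          rw [tsum_mul_left, htind q]
      _ = (1 / (1 - r)) * ∑ q ∈ Finset.range K, ((1 - a) / K) * Real.exp (l * (q * d)) := by
          rw [Finset.mul_sum]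
          refine Finset.sum_congr rfl fun q _ => ?_
          rw [one_div]
          ring
  · have hu : HasDerivAt (fun l : ℝ => 1 - a * Real.exp l) (-(a * Real.exp 0)) 0 :=
      ((Real.hasDerivAt_exp 0).const_mul a).const_sub 1
    have hu0 : (1 : ℝ) - a * Real.exp 0 ≠ 0 := by
      rw [Real.exp_zero, mul_one]; exact h1a
    have hg1 : HasDerivAt (fun l : ℝ => 1 / (1 - a * Real.exp l))
        (-(-(a * Real.exp 0)) / (1 - a * Real.exp 0) ^ 2) 0 := by
      simpa [one_div] using hu.fun_inv hu0
    have hg2 : HasDerivAt (fun l : ℝ => ∑ p ∈ Finset.range K, ((1 - a) / K) * Real.exp (l * (p * d)))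
        (∑ p ∈ Finset.range K, ((1 - a) / K) * (((p : ℝ) * d) * Real.exp (0 * ((p : ℝ) * d)))) 0 := by
      refine HasDerivAt.fun_sum fun p _ => ?_
      have h1 : HasDerivAt (fun l : ℝ => l * ((p : ℝ) * d)) ((p : ℝ) * d) 0 := by
        simpa using (hasDerivAt_id (0:ℝ)).mul_const ((p : ℝ) * d)
      have h2 := (Real.hasDerivAt_exp (0 * ((p : ℝ) * d))).comp 0 h1
      have h3 := h2.const_mul ((1 - a) / K)
      exact h3.congr_deriv (by ring)
    have hD := (hg1.fun_mul hg2).deriv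
    rw [hD]
    have hsum1 : (∑ p ∈ Finset.range K, ((1 - a) / K) * Real.exp ((0:ℝ) * (p * d))) = 1 - a := by
      simp only [zero_mul, Real.exp_zero, mul_one, Finset.sum_const, Finset.card_range,
        nsmul_eq_mul]
      field_simp
    have hsum2 : (∑ p ∈ Finset.range K, ((1 - a) / K) * (((p : ℝ) * d) * Real.exp (0 * ((p : ℝ) * d))))
        = ((1 - a) / K) * (d : ℝ) * ((K : ℝ) * ((K : ℝ) - 1) / 2) := by
      have hg := gauss_sum_real_aux K
      calc (∑ p ∈ Finset.range K, ((1 - a) / K) * (((p : ℝ) * d) * Real.exp (0 * ((p : ℝ) * d))))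
          = ∑ p ∈ Finset.range K, ((1 - a) / K) * (d : ℝ) * (p : ℝ) := by
            refine Finset.sum_congr rfl fun p _ => ?_
            rw [zero_mul, Real.exp_zero]
            ring
        _ = ((1 - a) / K) * (d : ℝ) * ((K : ℝ) * ((K : ℝ) - 1) / 2) := by
            rw [← Finset.mul_sum, hg]
    rw [hsum1, hsum2, Real.exp_zero]
    field_simp
end

section
/- Let a₋₁, a₁ be real numbers and F(z) = a₋₁ z² + z + a₁ with a₋₁ ≠ 0 having (possibly complex) roots z₁, z₂. If |a₋₁ + a₁| < 1 then the roots are real and satisfy (after ordering) |z₁| < 1 < |z₂|; conversely, if both roots are real with |z₁| < 1 < |z₂|, then |a₋₁ + a₁| < 1. -/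
theorem stability_iff_roots_straddle_unit_circle
    (am1 a1 : ℝ) (h : am1 ≠ 0) :
    |am1 + a1| < 1 ↔
      ∃ z₁ z₂ : ℝ,
        (∀ z : ℝ, am1 * z ^ 2 + z + a1 = am1 * (z - z₁) * (z - z₂))
        ∧ |z₁| < 1 ∧ 1 < |z₂| := by
  have ham : 0 < am1 ^ 2 := by rcases lt_or_gt_of_ne h with h' | h' <;> nlinarith
  constructor
  · intro hab
    obtain ⟨hab1, hab2⟩ := abs_lt.mp hab
    have hD : 0 < 1 - 4 * am1 * a1 := by nlinarith [sq_nonneg (am1 - a1)]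
    set s := Real.sqrt (1 - 4 * am1 * a1) with hs
    have hs2 : s ^ 2 = 1 - 4 * am1 * a1 := by
      rw [hs, sq, Real.mul_self_sqrt hD.le]
    set za := (-1 + s) / (2 * am1) with hza
    set zb := (-1 - s) / (2 * am1) with hzb
    have h2 : (2 * am1) ≠ 0 := mul_ne_zero two_ne_zero h
    have hfac : ∀ z : ℝ, am1 * z ^ 2 + z + a1 = am1 * (z - za) * (z - zb) := by
      intro z
      rw [hza, hzb]
      field_simp
      linear_combination hs2
    have key : am1 ^ 2 * ((1 - za ^ 2) * (1 - zb ^ 2)) = (am1 + a1) ^ 2 - 1 := by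
      have e1 := hfac 1
      have e2 := hfac (-1)
      linear_combination (-(am1 * (-1 - za) * (-1 - zb))) * e1 - (am1 + 1 + a1) * e2
    have key2 : (1 - za ^ 2) * (1 - zb ^ 2) < 0 := by nlinarith
    by_cases hca : za ^ 2 < 1
    · refine ⟨za, zb, hfac, ?_, ?_⟩
      · rw [abs_lt]; constructor <;> nlinarith
      · have hzb2 : 1 < zb ^ 2 := by nlinarith
        nlinarith [sq_abs zb, abs_nonneg zb]
    · refine ⟨zb, za, fun z => by rw [hfac z]; ring, ?_, ?_⟩
      · have hzb2 : zb ^ 2 < 1 := by nlinarith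
        rw [abs_lt]; constructor <;> nlinarith
      · have hza2 : 1 < za ^ 2 := by nlinarith
        nlinarith [sq_abs za, abs_nonneg za]
  · rintro ⟨z₁, z₂, hfac, h1, h2⟩
    obtain ⟨h1a, h1b⟩ := abs_lt.mp h1
    have hz2 : 1 < z₂ ^ 2 := by nlinarith [sq_abs z₂, abs_nonneg z₂]
    have e1 := hfac 1
    have e2 := hfac (-1)
    have key : am1 ^ 2 * ((1 - z₁ ^ 2) * (1 - z₂ ^ 2)) = (am1 + a1) ^ 2 - 1 := by
      linear_combination (-(am1 * (-1 - z₁) * (-1 - z₂))) * e1 - (am1 + 1 + a1) * e2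
    rw [abs_lt]
    constructor <;> nlinarith [mul_pos (mul_pos ham (by nlinarith : (0:ℝ) < 1 - z₁ ^ 2)) (by nlinarith : (0:ℝ) < z₂ ^ 2 - 1)]
end

section
/- For a one-channel 1D ARMA model a ∗ y = w ∗ x on ℤ/Nℤ (circular convolutions) with invertible a (all DFT coefficients nonzero), the gradient of a scalar loss L with respect to x satisfies a^T ∗ (∇_x L) = w^T ∗ (∇_y L), where f^T is the index-reversed sequence and ∇_y L is the gradient with respect to y. -/
/-- Discrete Fourier transform on `ZMod N` (of a real sequence). -/
noncomputable def dftR (N : ℕ) [NeZero N] (f : ZMod N → ℝ) (k : ZMod N) : ℂ :=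
  ∑ n : ZMod N, (f n : ℂ) * Complex.exp (-2 * Real.pi * Complex.I * n.val * k.val / N)

/-- Circular convolution of real sequences on `ZMod N`. -/
noncomputable def cconvR (N : ℕ) [NeZero N] (f g : ZMod N → ℝ) (i : ZMod N) : ℝ :=
  ∑ n : ZMod N, f n * g (i - n)

section ArmaAux

set_option linter.unusedSectionVars false

noncomputable def omN (N : ℕ) : ℂ := Complex.exp (-2 * Real.pi * Complex.I / N)

variable (N : ℕ) [NeZero N]

lemma omN_pow_N : omN N ^ N = 1 := by
  rw [omN, ← Complex.exp_nat_mul]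
  have : (N : ℂ) ≠ 0 := Nat.cast_ne_zero.2 (NeZero.ne N)
  rw [show (N : ℂ) * (-2 * Real.pi * Complex.I / N) = -(2 * Real.pi * Complex.I) by
    field_simp]
  rw [Complex.exp_neg, Complex.exp_two_pi_mul_I, inv_one]

lemma exp_eq_omN_pow (m c : ℕ) :
    Complex.exp (-2 * Real.pi * Complex.I * m * c / N) = omN N ^ (m * c) := by
  rw [omN, ← Complex.exp_nat_mul]
  congr 1
  push_cast
  ring

lemma dftR_eq (f : ZMod N → ℝ) (k : ZMod N) :
    dftR N f k = ∑ n : ZMod N, (f n : ℂ) * omN N ^ (n.val * k.val) := by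
  refine Finset.sum_congr rfl fun n _ => ?_
  rw [exp_eq_omN_pow]

lemma omN_pow_mod (m c : ℕ) : omN N ^ ((m % N) * c) = omN N ^ (m * c) := by
  rw [pow_eq_pow_mod (m % N * c) (omN_pow_N N), pow_eq_pow_mod (m * c) (omN_pow_N N)]
  congr 1
  exact Nat.ModEq.mul_right c (Nat.mod_modEq m N)

lemma omN_pow_val_add (s t : ZMod N) (c : ℕ) :
    omN N ^ ((s + t).val * c) = omN N ^ (s.val * c) * omN N ^ (t.val * c) := by
  rw [ZMod.val_add, omN_pow_mod, add_mul, pow_add]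

lemma dftR_cconv (f g : ZMod N → ℝ) (k : ZMod N) :
    dftR N (cconvR N f g) k = dftR N f k * dftR N g k := by
  rw [dftR_eq, dftR_eq, dftR_eq, Finset.sum_mul_sum]
  simp only [cconvR]
  push_cast
  simp only [Finset.sum_mul]
  rw [Finset.sum_comm]
  refine Finset.sum_congr rfl fun n _ => ?_
  refine Fintype.sum_equiv (Equiv.subRight n) _ _ fun i => ?_
  simp only [Equiv.subRight_apply]
  have h2 : n + (i - n) = i := by ring
  have h3 := omN_pow_val_add N n (i - n) k.val
  rw [h2] at h3
  rw [h3]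
  ring

lemma sum_val_range (F : ℕ → ℂ) : ∑ k : ZMod N, F k.val = ∑ j ∈ Finset.range N, F j := by
  refine Finset.sum_nbij' (fun k => k.val) (fun j => (j : ZMod N)) ?_ ?_ ?_ ?_ ?_
  · exact fun k _ => Finset.mem_range.2 (ZMod.val_lt k)
  · exact fun j _ => Finset.mem_univ _
  · exact fun k _ => by simp [ZMod.natCast_val, ZMod.cast_id]
  · exact fun j hj => ZMod.val_cast_of_lt (Finset.mem_range.1 hj)
  · exact fun k _ => rfl

lemma dftR_eq_zero_imp (f : ZMod N → ℝ) (h : ∀ k, dftR N f k = 0) : ∀ n, f n = 0 := by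
  intro n
  have hω : IsPrimitiveRoot (omN N) N := by
    have h0 := (Complex.isPrimitiveRoot_exp N (NeZero.ne N)).inv
    rw [← Complex.exp_neg] at h0
    have : omN N = Complex.exp (-(2 * Real.pi * Complex.I / N)) := by
      rw [omN]; congr 1; ring
    rw [this]; exact h0
  have key : ∑ k : ZMod N, dftR N f k * ((omN N)⁻¹) ^ (n.val * k.val) = (N : ℂ) * f n := by
    simp only [dftR_eq, Finset.sum_mul]
    rw [Finset.sum_comm]
    have inner : ∀ m : ZMod N,
        (∑ k : ZMod N, (f m : ℂ) * omN N ^ (m.val * k.val) * (omN N)⁻¹ ^ (n.val * k.val))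
          = (f m : ℂ) * (if m = n then (N : ℂ) else 0) := by
      intro m
      have hrw : ∀ k : ZMod N,
          (f m : ℂ) * omN N ^ (m.val * k.val) * (omN N)⁻¹ ^ (n.val * k.val)
            = (f m : ℂ) * (omN N ^ m.val * ((omN N) ^ n.val)⁻¹) ^ k.val := by
        intro k
        rw [pow_mul, pow_mul, inv_pow, inv_pow, mul_pow]
        ring
      rw [Finset.sum_congr rfl fun k _ => hrw k, ← Finset.mul_sum]
      congr 1
      set z : ℂ := omN N ^ m.val * ((omN N) ^ n.val)⁻¹ with hz
      rw [sum_val_range N (fun j => z ^ j)]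
      by_cases hmn : m = n
      · subst hmn
        have : z = 1 := by
          rw [hz, mul_inv_eq_one₀]
          exact pow_ne_zero _ (by rw [omN]; exact Complex.exp_ne_zero _)
        simp [this]
      · have hz1 : z ≠ 1 := by
          rw [hz]
          intro hcon
          rw [mul_inv_eq_one₀ (pow_ne_zero _ (by rw [omN]; exact Complex.exp_ne_zero _))] at hcon
          exact hmn (ZMod.val_injective N (hω.pow_inj (ZMod.val_lt m) (ZMod.val_lt n) hcon))
        have hzN : z ^ N = 1 := by
          rw [hz, mul_pow, inv_pow, ← pow_mul, ← pow_mul, mul_comm m.val N, mul_comm n.val N,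
            pow_mul, pow_mul, omN_pow_N, one_pow, one_pow, inv_one, mul_one]
        rw [geom_sum_eq hz1, hzN, sub_self, zero_div]
        simp [hmn]
    rw [Finset.sum_congr rfl fun m _ => inner m]
    simp only [mul_ite, mul_zero]
    rw [Finset.sum_ite_eq' Finset.univ n (fun m => (f m : ℂ) * (N : ℂ))]
    simp [mul_comm]
  have hS : ∑ k : ZMod N, dftR N f k * ((omN N)⁻¹) ^ (n.val * k.val) = 0 := by
    simp [h]
  rw [hS] at key
  have hN : (N : ℂ) ≠ 0 := Nat.cast_ne_zero.2 (NeZero.ne N)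
  have := (mul_eq_zero.1 key.symm).resolve_left hN
  exact_mod_cast this

lemma cconv_inj (a : ZMod N → ℝ) (hA : ∀ k, dftR N a k ≠ 0)
    (v : ZMod N → ℝ) (hv : ∀ j, cconvR N a v j = 0) : ∀ i, v i = 0 := by
  apply dftR_eq_zero_imp
  intro k
  have h1 : dftR N (cconvR N a v) k = 0 := by
    have : cconvR N a v = fun _ => 0 := funext hv
    rw [this]
    simp [dftR]
  rw [dftR_cconv] at h1
  exact (mul_eq_zero.1 h1).resolve_left (hA k)

end ArmaAux

theorem arma_backprop_input_gradient
    (N : ℕ) [NeZero N] (a w : ZMod N → ℝ)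
    (hA : ∀ k, dftR N a k ≠ 0)
    (Y : (ZMod N → ℝ) → ZMod N → ℝ)
    (hY : ∀ x i, cconvR N a (Y x) i = cconvR N w x i)
    (hdiff : ∀ j : ZMod N, Differentiable ℝ (fun x' : ZMod N → ℝ => Y x' j))
    (x gy gx : ZMod N → ℝ)
    (hgx : ∀ i : ZMod N,
      gx i = ∑ j : ZMod N,
        fderiv ℝ (fun x' : ZMod N → ℝ => Y x' j) x (Pi.single i 1) * gy j) :
    ∀ i : ZMod N,
      cconvR N (fun j => a (-j)) gx i = cconvR N (fun j => w (-j)) gy i := by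
  set D : ZMod N → ZMod N → ℝ :=
    fun j k => fderiv ℝ (fun x' : ZMod N → ℝ => Y x' j) x (Pi.single k 1) with hD
  have hstar : ∀ j k : ZMod N, (∑ n : ZMod N, a n * D (j - n) k) = w (j - k) := by
    intro j k
    have hF : HasFDerivAt (fun x' : ZMod N → ℝ => cconvR N a (Y x') j)
        (∑ n : ZMod N, a n • fderiv ℝ (fun x' : ZMod N → ℝ => Y x' (j - n)) x) x := by
      simp only [cconvR]
      exact HasFDerivAt.fun_sum fun n _ =>
        ((hdiff (j - n)).differentiableAt.hasFDerivAt).const_mul (a n)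
    have hG : HasFDerivAt (fun x' : ZMod N → ℝ => cconvR N w x' j)
        (∑ n : ZMod N, w n • (ContinuousLinearMap.proj (j - n) :
          (ZMod N → ℝ) →L[ℝ] ℝ)) x := by
      simp only [cconvR]
      exact HasFDerivAt.fun_sum fun n _ => (hasFDerivAt_apply (j - n) x).const_mul (w n)
    have hFG : (fun x' : ZMod N → ℝ => cconvR N a (Y x') j)
        = (fun x' : ZMod N → ℝ => cconvR N w x' j) := funext fun x' => hY x' j
    rw [hFG] at hF
    have heq := hF.unique hG
    have happ := congrArg (fun L => L (Pi.single k 1)) heq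
    simp only [ContinuousLinearMap.sum_apply, ContinuousLinearMap.smul_apply,
      ContinuousLinearMap.proj_apply, smul_eq_mul] at happ
    rw [hD]
    rw [happ]
    have : ∀ n : ZMod N, (Pi.single k 1 : ZMod N → ℝ) (j - n) = if n = j - k then 1 else 0 := by
      intro n
      rw [Pi.single_apply]
      have hiff : (j - n = k) ↔ (n = j - k) := by
        constructor
        · intro h; rw [← h]; ring
        · intro h; rw [h]; ring
      exact if_congr hiff rfl rfl
    simp only [this, mul_ite, mul_one, mul_zero]
    rw [Finset.sum_ite_eq' Finset.univ (j - k) w]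
    simp
  have hcirc : ∀ j k : ZMod N, D j k = D (j - k) 0 := by
    intro j k
    have hv := cconv_inj N a hA (fun j' => D j' k - D (j' - k) 0) ?_
    · have := hv j
      linarith
    · intro j'
      simp only [cconvR, mul_sub]
      rw [Finset.sum_sub_distrib, hstar j' k]
      have hre : ∀ n : ZMod N, j' - n - k = j' - k - n := fun n => by ring
      simp only [hre]
      rw [hstar (j' - k) 0, sub_zero, sub_self]
  intro i
  have hL : cconvR N (fun j => a (-j)) gx i = ∑ j : ZMod N, w (j - i) * gy j := by
    simp only [cconvR]
    have h1 : ∀ n : ZMod N, a (-n) * gx (i - n)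
        = ∑ j : ZMod N, a (-n) * (D j (i - n) * gy j) := by
      intro n
      rw [hgx (i - n), Finset.mul_sum]
    simp only [h1]
    rw [Finset.sum_comm]
    refine Finset.sum_congr rfl fun j _ => ?_
    have h2 : ∀ n : ZMod N, D j (i - n) = D (j - i + n) 0 := by
      intro n
      rw [hcirc j (i - n)]
      congr 1
      ring
    simp only [h2]
    have h3 : (∑ n : ZMod N, a (-n) * (D (j - i + n) 0 * gy j))
        = ∑ m : ZMod N, a m * (D (j - i - m) 0 * gy j) := by
      refine Fintype.sum_equiv (Equiv.neg (ZMod N)) _ _ fun n => ?_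
      simp only [Equiv.neg_apply, sub_neg_eq_add]
    rw [h3]
    have h4 : (∑ m : ZMod N, a m * (D (j - i - m) 0 * gy j))
        = (∑ m : ZMod N, a m * D (j - i - m) 0) * gy j := by
      rw [Finset.sum_mul]
      exact Finset.sum_congr rfl fun m _ => by ring
    rw [h4, hstar (j - i) 0, sub_zero]
  have hR : cconvR N (fun j => w (-j)) gy i = ∑ j : ZMod N, w (j - i) * gy j := by
    simp only [cconvR]
    refine (Fintype.sum_equiv (Equiv.subLeft i) _ _ fun j => ?_).symm
    simp only [Equiv.subLeft_apply]
    have e1 : -(i - j) = j - i := by ring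
    have e2 : i - (i - j) = j := by ring
    rw [e1, e2]
  rw [hL, hR]
end

section
/- Let a be a bi-infinite absolutely summable sequence whose Z-transform A(z) = a₋₁ z + 1 + a₁ z⁻¹ (with a₋₁ a₁ ≠ 0) has F(z) = zA(z) with real roots z₁, z₂ satisfying |z₁| < 1 < |z₂|. Then there exists an absolutely summable sequence h with (a ∗ h)_i = δ_{i0}, and consequently the map x ↦ h ∗ x is BIBO stable: for all bounded x, sup_i |(h ∗ x)_i| ≤ (Σ_i |h_i|)·sup_i |x_i|. -/
set_option maxHeartbeats 1000000

theorem length_three_ar_filter_has_summable_inverse_and_is_bibo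
    (a : ℤ → ℝ) (ha0 : a 0 = 1)
    (hsupp : ∀ i : ℤ, i ≠ -1 → i ≠ 0 → i ≠ 1 → a i = 0)
    (ham1 : a (-1) ≠ 0) (ha1 : a 1 ≠ 0)
    (z₁ z₂ : ℝ)
    (hfact : ∀ z : ℝ, a (-1) * z ^ 2 + z + a 1 = a (-1) * (z - z₁) * (z - z₂))
    (hz₁ : |z₁| < 1) (hz₂ : 1 < |z₂|) :
    ∃ h : ℤ → ℝ, Summable (fun i : ℤ => |h i|)
      ∧ (∀ i : ℤ, ∑' p : ℤ, a p * h (i - p) = if i = 0 then 1 else 0)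
      ∧ ∀ (x : ℤ → ℝ) (B : ℝ), (∀ i, |x i| ≤ B) →
          ∀ i : ℤ, |∑' p : ℤ, h p * x (i - p)| ≤ (∑' j : ℤ, |h j|) * B := by
  -- algebraic identities
  have hp : a (-1) * z₁ * z₂ = a 1 := by linear_combination (-1 : ℝ) * hfact 0
  have hs : a (-1) * (z₁ + z₂) = -1 := by linear_combination (hfact 1 - hfact (-1)) / 2
  have hr1 : a (-1) * z₁ ^ 2 + z₁ + a 1 = 0 := by linear_combination hfact z₁
  have hr2 : a (-1) * z₂ ^ 2 + z₂ + a 1 = 0 := by linear_combination hfact z₂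
  have hz₂0 : z₂ ≠ 0 := by
    intro h; rw [h] at hz₂; simp at hz₂; linarith
  have hz₁0 : z₁ ≠ 0 := by
    intro h; rw [h] at hp; simp at hp; exact ha1 hp.symm
  have hne : z₁ - z₂ ≠ 0 := by
    intro h
    have : z₁ = z₂ := by linarith
    rw [this] at hz₁; linarith
  set c : ℝ := (a (-1) * (z₁ - z₂))⁻¹ with hc
  set h : ℤ → ℝ := fun i => if 0 ≤ i then c * z₁ ^ i else c * z₂ ^ i with hh
  have hpos : ∀ i : ℤ, 0 ≤ i → h i = c * z₁ ^ i := fun i hi => if_pos hi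
  have hneg : ∀ i : ℤ, i ≤ 0 → h i = c * z₂ ^ i := by
    intro i hi
    rcases eq_or_lt_of_le hi with hi | hi
    · subst hi; simp [hh]
    · exact if_neg (by omega)
  have epow : ∀ (x : ℝ), x ≠ 0 → ∀ i : ℤ,
      x ^ (i + 1) = x ^ (i - 1) * x * x ∧ x ^ i = x ^ (i - 1) * x := by
    intro x hx i
    have e2 : x ^ i = x ^ (i - 1) * x := by
      have := zpow_add_one₀ hx (i - 1)
      rwa [sub_add_cancel] at this
    exact ⟨by rw [zpow_add_one₀ hx i, e2], e2⟩
  -- the recurrence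
  have hrec : ∀ i : ℤ, a (-1) * h (i + 1) + h i + a 1 * h (i - 1)
      = if i = 0 then 1 else 0 := by
    intro i
    rcases lt_trichotomy i 0 with hi | hi | hi
    · rw [if_neg hi.ne, hneg _ (by omega), hneg _ hi.le, hneg _ (by omega)]
      obtain ⟨e1, e2⟩ := epow z₂ hz₂0 i
      rw [e1, e2]
      linear_combination c * z₂ ^ (i - 1) * hr2
    · subst hi
      rw [if_pos rfl, hpos _ (by norm_num), hpos _ le_rfl, hneg _ (by norm_num)]
      simp only [hc, zero_add, zero_sub, zpow_one, zpow_zero, zpow_neg_one]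
      have hd : a (-1) * (z₁ - z₂) ≠ 0 := mul_ne_zero ham1 hne
      have k1 : a 1 * z₂⁻¹ = a (-1) * z₁ := by
        field_simp
        linear_combination -hp
      have k2 : a (-1) * z₁ + 1 + a 1 * z₂⁻¹ = a (-1) * (z₁ - z₂) := by
        rw [k1]; linear_combination hs
      linear_combination (a (-1) * (z₁ - z₂))⁻¹ * k2 + inv_mul_cancel₀ hd
    · rw [if_neg hi.ne', hpos _ (by omega), hpos _ hi.le, hpos _ (by omega)]
      obtain ⟨e1, e2⟩ := epow z₁ hz₁0 i
      rw [e1, e2]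
      linear_combination c * z₁ ^ (i - 1) * hr1
  -- summability
  have hsum : Summable (fun i : ℤ => |h i|) := by
    apply Summable.of_nat_of_neg
    · have : (fun n : ℕ => |h (n : ℤ)|) = fun n : ℕ => |c| * |z₁| ^ n := by
        funext n
        rw [hpos _ (by positivity), zpow_natCast, abs_mul, abs_pow]
      rw [this]
      exact (summable_geometric_of_lt_one (abs_nonneg _) hz₁).mul_left _
    · have : (fun n : ℕ => |h (-(n : ℤ))|) = fun n : ℕ => |c| * (|z₂|⁻¹) ^ n := by
        funext n
        simp [hneg _ (by omega : -(n:ℤ) ≤ 0), zpow_neg, zpow_natCast, abs_mul, abs_inv,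
          abs_pow, inv_pow]
      rw [this]
      refine (summable_geometric_of_lt_one (by positivity) ?_).mul_left _
      rw [inv_lt_one_iff₀]; right; exact hz₂
  refine ⟨h, hsum, ?_, ?_⟩
  · intro i
    have hvan : ∀ p ∉ ({-1, 0, 1} : Finset ℤ), a p * h (i - p) = 0 := by
      intro p hp'
      simp only [Finset.mem_insert, Finset.mem_singleton] at hp'
      push_neg at hp'
      rw [hsupp p hp'.1 hp'.2.1 hp'.2.2, zero_mul]
    rw [tsum_eq_sum hvan]
    have : ∑ p ∈ ({-1, 0, 1} : Finset ℤ), a p * h (i - p)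
        = a (-1) * h (i + 1) + a 0 * h i + a 1 * h (i - 1) := by
      rw [show ({-1, 0, 1} : Finset ℤ) = {-1} ∪ {0} ∪ {1} by rfl]
      rw [Finset.sum_union (by decide), Finset.sum_union (by decide),
        Finset.sum_singleton, Finset.sum_singleton, Finset.sum_singleton]
      norm_num [sub_neg_eq_add]
    rw [this, ha0, one_mul]
    exact hrec i
  · intro x B hB i
    have hB0 : 0 ≤ B := le_trans (abs_nonneg _) (hB 0)
    have hsum2 : Summable (fun p : ℤ => |h p * x (i - p)|) := by
      apply Summable.of_nonneg_of_le (fun p => abs_nonneg _)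
        (fun p => ?_) (hsum.mul_right B)
      rw [abs_mul]
      exact mul_le_mul_of_nonneg_left (hB _) (abs_nonneg _)
    have hn : Summable (fun p : ℤ => ‖h p * x (i - p)‖) := by
      simpa only [Real.norm_eq_abs] using hsum2
    have h1 := norm_tsum_le_tsum_norm hn
    simp only [Real.norm_eq_abs] at h1
    calc |∑' p : ℤ, h p * x (i - p)| ≤ ∑' p : ℤ, |h p * x (i - p)| := h1
      _ ≤ ∑' p : ℤ, |h p| * B := by
          apply Summable.tsum_le_tsum _ hsum2 (hsum.mul_right B)
          intro p
          rw [abs_mul]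
          exact mul_le_mul_of_nonneg_left (hB _) (abs_nonneg _)
      _ = (∑' j : ℤ, |h j|) * B := tsum_mul_right
end
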